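/- Let (S, T, η, ε) be an adjunction between abelian categories where D has enough injectives. If there exists an object N of D such that T(N) is a cogenerator of C, then S is faithful. Conversely, if S is faithful and N is a cogenerator of D, then T(N) is a cogenerator of C. Consequently, S is faithful if and only if T preserves cogenerator objects. -/
import Mathlib


open CategoryTheory Limits

universe v₁ v₂ u₁ u₂

/-- Let `(S, T)` be an adjunction between abelian categories where `D` has a
cogenerator and enough injectives.  If there is an object `N` of `D` with
`T(N)` a cogenerator of `C`, then `S` is faithful.  Conversely, if `S` is
faithful and `N` is a cogenerator of `D`, then `T(N)` is a cogenerator of `C`.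
Consequently, `S` is faithful if and only if `T` preserves cogenerators. -/
theorem faithful_iff_rightAdjoint_preserves_cogenerators
    {C : Type u₁} {D : Type u₂} [Category.{v₁} C] [Category.{v₂} D]
    [Abelian C] [Abelian D] [EnoughInjectives D]
    (hD : ∃ Q : D, IsCoseparator Q)
    (S : C ⥤ D) (T : D ⥤ C) (adj : S ⊣ T) :
    ((∃ N : D, IsCoseparator (T.obj N)) → S.Faithful) ∧
    (S.Faithful → ∀ N : D, IsCoseparator N → IsCoseparator (T.obj N)) ∧
    (S.Faithful ↔ ∀ N : D, IsCoseparator N → IsCoseparator (T.obj N)) := by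
  have h1 : (∃ N : D, IsCoseparator (T.obj N)) → S.Faithful := by
    rintro ⟨N, hN⟩
    refine ⟨fun {X Y} f g hfg => ?_⟩
    refine (isCoseparator_def _).1 hN f g fun h => ?_
    obtain ⟨h', rfl⟩ := (adj.homEquiv Y N).surjective h
    rw [← adj.homEquiv_naturality_left, ← adj.homEquiv_naturality_left, hfg]
  have h2 : S.Faithful → ∀ N : D, IsCoseparator N → IsCoseparator (T.obj N) := by
    intro hS N hN
    refine (isCoseparator_def _).2 fun X Y f g hfg => ?_
    refine hS.map_injective ((isCoseparator_def _).1 hN _ _ fun h => ?_)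
    have := hfg (adj.homEquiv Y N h)
    rw [← adj.homEquiv_naturality_left, ← adj.homEquiv_naturality_left] at this
    exact (adj.homEquiv X N).injective this
  exact ⟨h1, h2, fun hS => h2 hS, fun h => h1 ⟨hD.choose, h _ hD.choose_spec⟩⟩
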